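/- Let n be even and let λ = (λ_1 ≥ ... ≥ λ_n) be a real vector with λ_1 + ··· + λ_n = 0 and λ_1 ≥ -λ_n. Then λ is majorized by λ_1 · (1, ..., 1, -1, ..., -1) (n/2 ones followed by n/2 negative ones). -/
import Mathlib

/-- For vectors `x y : Fin n → ℝ` that are already sorted in decreasing order,
`MajorizesSorted x y` says that `x` majorizes `y`: every partial sum of `y` is
bounded by the corresponding partial sum of `x`, and the total sums agree. -/
def MajorizesSorted {n : ℕ} (x y : Fin n → ℝ) : Prop :=
  (∀ k : ℕ, k ≤ n →
      ∑ i ∈ Finset.univ.filter (fun i : Fin n => (i : ℕ) < k), y i ≤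
        ∑ i ∈ Finset.univ.filter (fun i : Fin n => (i : ℕ) < k), x i) ∧
    ∑ i, y i = ∑ i, x i

lemma card_filter_val_lt (n k : ℕ) :
    (Finset.univ.filter (fun i : Fin n => (i : ℕ) < k)).card = min k n := by
  rw [← Finset.card_image_of_injective _ Fin.val_injective]
  have : (Finset.univ.filter (fun i : Fin n => (i : ℕ) < k)).image Fin.val
      = Finset.range (min k n) := by
    ext m
    simp only [Finset.mem_image, Finset.mem_filter, Finset.mem_univ, true_and,
      Finset.mem_range, Nat.lt_min]
    constructor
    · rintro ⟨i, hi, rfl⟩; exact ⟨hi, i.isLt⟩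
    · rintro ⟨h1, h2⟩; exact ⟨⟨m, h2⟩, h1, rfl⟩
  rw [this, Finset.card_range]

lemma card_filter_val_not_lt (n k : ℕ) (hk : k ≤ n) :
    (Finset.univ.filter (fun i : Fin n => ¬ (i : ℕ) < k)).card = n - k := by
  have := Finset.card_filter_add_card_filter_not
    (s := (Finset.univ : Finset (Fin n))) (p := fun i : Fin n => (i : ℕ) < k)
  rw [card_filter_val_lt, Finset.card_univ, Fintype.card_fin] at this
  omega

lemma sum_x_eq (n k : ℕ) (hk : k ≤ n) (a : ℝ) :
    ∑ i ∈ Finset.univ.filter (fun i : Fin n => (i : ℕ) < k),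
      (a * (if (i : ℕ) < n / 2 then 1 else -1))
    = a * (((min k (n / 2) : ℕ) : ℝ) - ((k - min k (n / 2) : ℕ) : ℝ)) := by
  rw [← Finset.mul_sum]
  congr 1
  rw [Finset.sum_ite, Finset.sum_const, Finset.sum_const]
  have h1 : ((Finset.univ.filter (fun i : Fin n => (i : ℕ) < k)).filter
      (fun i : Fin n => (i : ℕ) < n / 2)).card = min k (n / 2) := by
    rw [Finset.filter_filter]
    have heq : Finset.univ.filter (fun i : Fin n => (i : ℕ) < k ∧ (i : ℕ) < n / 2)
        = Finset.univ.filter (fun i : Fin n => (i : ℕ) < min k (n / 2)) :=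
      Finset.filter_congr (fun i _ => by simp [Nat.lt_min])
    rw [heq, card_filter_val_lt]
    omega
  have h2 : ((Finset.univ.filter (fun i : Fin n => (i : ℕ) < k)).filter
      (fun i : Fin n => ¬ (i : ℕ) < n / 2)).card = k - min k (n / 2) := by
    have := Finset.card_filter_add_card_filter_not
      (s := Finset.univ.filter (fun i : Fin n => (i : ℕ) < k))
      (p := fun i : Fin n => (i : ℕ) < n / 2)
    rw [card_filter_val_lt, h1] at this
    omega
  rw [h1, h2]
  have hle : min k (n / 2) ≤ k := min_le_left _ _
  simp only [nsmul_eq_mul, mul_one, mul_neg_one]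
  rw [Nat.cast_sub hle]
  ring

theorem majorized_by_ones_neg_ones {n : ℕ} (hn : Even n) (hn0 : 0 < n) (lam : Fin n → ℝ)
    (hsorted : Antitone lam) (hsum : ∑ i, lam i = 0)
    (hdom : -lam ⟨n - 1, by omega⟩ ≤ lam ⟨0, hn0⟩) :
    MajorizesSorted
      (fun i => lam ⟨0, hn0⟩ * (if (i : ℕ) < n / 2 then 1 else -1)) lam := by
  obtain ⟨m, hm⟩ := hn
  have hn2 : n / 2 = m := by omega
  set a := lam ⟨0, hn0⟩ with ha
  have hub : ∀ i : Fin n, lam i ≤ a := fun i =>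
    hsorted (show (⟨0, hn0⟩ : Fin n) ≤ i from Fin.mk_le_mk.mpr (Nat.zero_le _))
  have hlb : ∀ i : Fin n, -lam i ≤ a := fun i => by
    have : lam ⟨n - 1, by omega⟩ ≤ lam i :=
      hsorted (show i ≤ (⟨n - 1, by omega⟩ : Fin n) from Fin.mk_le_mk.mpr (by omega))
    linarith [hdom]
  constructor
  · intro k hk
    rw [sum_x_eq n k hk a]
    by_cases hkm : k ≤ n / 2
    · have hmin : min k (n / 2) = k := by omega
      rw [hmin]
      have hz : (k - k : ℕ) = 0 := by omega
      rw [hz]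
      have step : ∑ i ∈ Finset.univ.filter (fun i : Fin n => (i : ℕ) < k), lam i
          ≤ ∑ i ∈ Finset.univ.filter (fun i : Fin n => (i : ℕ) < k), a :=
        Finset.sum_le_sum (fun i _ => hub i)
      rw [Finset.sum_const, card_filter_val_lt, min_eq_left hk, nsmul_eq_mul] at step
      push_cast
      linarith
    · have hmin : min k (n / 2) = n / 2 := by omega
      rw [hmin]
      have htot : ∑ i ∈ Finset.univ.filter (fun i : Fin n => (i : ℕ) < k), lam i
          + ∑ i ∈ Finset.univ.filter (fun i : Fin n => ¬ (i : ℕ) < k), lam i = 0 := by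
        rw [Finset.sum_filter_add_sum_filter_not, hsum]
      have step : ∑ i ∈ Finset.univ.filter (fun i : Fin n => ¬ (i : ℕ) < k), (-lam i)
          ≤ ∑ i ∈ Finset.univ.filter (fun i : Fin n => ¬ (i : ℕ) < k), a :=
        Finset.sum_le_sum (fun i _ => hlb i)
      rw [Finset.sum_neg_distrib, Finset.sum_const, card_filter_val_not_lt n k hk,
        nsmul_eq_mul] at step
      have hcast : ((k - n / 2 : ℕ) : ℝ) = (k : ℝ) - ((n / 2 : ℕ) : ℝ) :=
        Nat.cast_sub (Nat.le_of_lt (Nat.lt_of_not_le hkm))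
      rw [hcast]
      have hncast : ((n - k : ℕ) : ℝ) = (n : ℝ) - k := Nat.cast_sub hk
      rw [hncast] at step
      have hnn : ((n : ℝ)) = 2 * ((n / 2 : ℕ) : ℝ) := by
        rw [hn2, hm]; push_cast; ring
      have heq : a * (((n / 2 : ℕ) : ℝ) - ((k : ℝ) - ((n / 2 : ℕ) : ℝ)))
          = ((n : ℝ) - k) * a := by rw [hnn]; ring
      rw [heq]
      linarith
  · have h := sum_x_eq n n le_rfl a
    have huniv : Finset.univ.filter (fun i : Fin n => (i : ℕ) < n) = Finset.univ := by
      apply Finset.filter_true_of_mem; intro i _; exact i.isLt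
    rw [huniv] at h
    rw [hsum, h]
    have h1 : min n (n / 2) = n / 2 := by omega
    rw [h1]
    have h2 : n - n / 2 = n / 2 := by omega
    rw [h2]
    ring
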